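/- Let $I(u) = 2 + u\,\sinh^{-1}(u/2) - \sqrt{4 + u^2}$ for $u \ge 0$. Then $I$ is nonnegative, convex, $I(0) = 0$, and for every $n \ge 0$, $\sum_{k=1}^{\infty} e^{-I(k/(n+1))} \le (n+1) \sum_{k=0}^{\infty} e^{-I(k)}$. -/

import Mathlib

/-- The large deviations rate function of the rate-2 simple symmetric walk. -/
noncomputable def rateI (u : ℝ) : ℝ := 2 + u * Real.arsinh (u / 2) - Real.sqrt (4 + u ^ 2)

lemma rateI_hasDerivAt (u : ℝ) : HasDerivAt rateI (Real.arsinh (u / 2)) u := by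
  have hpos : (0:ℝ) < 4 + u ^ 2 := by positivity
  set s := Real.sqrt (4 + u ^ 2) with hs
  have hs0 : 0 < s := Real.sqrt_pos.mpr hpos
  have hs2 : s ^ 2 = 4 + u ^ 2 := Real.sq_sqrt hpos.le
  have hhalf : Real.sqrt (1 + (u / 2) ^ 2) = s / 2 := by
    have : 1 + (u / 2) ^ 2 = (s / 2) ^ 2 := by rw [div_pow, div_pow, hs2]; ring
    rw [this, Real.sqrt_sq (by positivity)]
  have h1 : HasDerivAt (fun x : ℝ => Real.arsinh (x / 2))
      ((Real.sqrt (1 + (u / 2) ^ 2))⁻¹ * (1 / 2)) u :=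
    by have := (Real.hasDerivAt_arsinh (u / 2)).comp u ((hasDerivAt_id u).div_const 2); exact this
  have h2 : HasDerivAt (fun x : ℝ => x * Real.arsinh (x / 2))
      (1 * Real.arsinh (u / 2) + u * ((Real.sqrt (1 + (u / 2) ^ 2))⁻¹ * (1 / 2))) u :=
    (hasDerivAt_id u).mul h1
  have h3 : HasDerivAt (fun x : ℝ => Real.sqrt (4 + x ^ 2)) (u / s) u := by
    have h := (((hasDerivAt_pow 2 u).const_add 4)).sqrt (by positivity)
    convert h using 1
    rw [← hs]
    field_simp
    ring
  have h4 := (h2.const_add 2).sub h3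
  have heq : 1 * Real.arsinh (u / 2) + u * ((Real.sqrt (1 + (u / 2) ^ 2))⁻¹ * (1 / 2))
      - u / s = Real.arsinh (u / 2) := by
    rw [hhalf]
    field_simp
    ring
  rw [heq] at h4
  exact h4

lemma rateI_monotoneOn : MonotoneOn rateI (Set.Ici (0:ℝ)) := by
  have hdiff : Differentiable ℝ rateI := fun u => (rateI_hasDerivAt u).differentiableAt
  apply monotoneOn_of_deriv_nonneg (convex_Ici 0) hdiff.continuous.continuousOn
    hdiff.differentiableOn
  intro x hx
  rw [interior_Ici] at hx
  rw [(rateI_hasDerivAt x).deriv]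
  exact Real.arsinh_nonneg_iff.mpr (by linarith [Set.mem_Ioi.mp hx] : (0:ℝ) ≤ x / 2)

lemma rateI_zero : rateI 0 = 0 := by
  have h4 : Real.sqrt 4 = 2 := by
    rw [show (4:ℝ) = 2 ^ 2 by norm_num, Real.sqrt_sq (by norm_num : (0:ℝ) ≤ 2)]
  simp [rateI, Real.arsinh_zero, h4]

lemma rateI_nonneg (u : ℝ) (hu : 0 ≤ u) : 0 ≤ rateI u := by
  have := rateI_monotoneOn (Set.self_mem_Ici) hu hu
  rwa [rateI_zero] at this

lemma rateI_ge (u : ℝ) (hu : (8:ℝ) ≤ u) : u ≤ rateI u := by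
  have h2 : (2:ℝ) ≤ Real.arsinh (u / 2) := by
    have he : Real.exp 2 < 8 := by
      have h1 := Real.exp_one_lt_d9
      have : Real.exp 2 = Real.exp 1 * Real.exp 1 := by
        rw [← Real.exp_add]; norm_num
      nlinarith [Real.exp_pos 1]
    have hp : 0 < Real.exp (-2:ℝ) := Real.exp_pos _
    have hsinh : Real.sinh 2 ≤ u / 2 := by
      rw [Real.sinh_eq]
      linarith
    have := Real.arsinh_le_arsinh.mpr hsinh
    rwa [Real.arsinh_sinh] at this
  have hs : Real.sqrt (4 + u ^ 2) ≤ 2 + u := by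
    rw [show (2:ℝ) + u = Real.sqrt ((2 + u) ^ 2) by
      rw [Real.sqrt_sq (by linarith)]]
    apply Real.sqrt_le_sqrt
    nlinarith
  have : u * 2 ≤ u * Real.arsinh (u / 2) := by
    apply mul_le_mul_of_nonneg_left h2 (by linarith)
  unfold rateI
  linarith

lemma summable_g : Summable (fun k : ℕ => Real.exp (-rateI k)) := by
  rw [← summable_nat_add_iff 8]
  have hbound : ∀ k : ℕ, Real.exp (-rateI ((k + 8 : ℕ) : ℝ)) ≤ Real.exp (-(k:ℝ)) := by
    intro k
    apply Real.exp_le_exp.mpr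
    have h := rateI_ge ((k:ℝ) + 8) (le_add_of_nonneg_left (Nat.cast_nonneg k))
    push_cast
    linarith
  exact Summable.of_nonneg_of_le (fun k => (Real.exp_pos _).le) hbound
    Real.summable_exp_neg_nat

/-- The rate function `I(u) = 2 + u arsinh(u/2) - √(4+u²)` is nonnegative and convex on
`[0,∞)` with `I(0) = 0`, and for every `n ≥ 0`,
`∑_{k=1}^∞ e^{-I(k/(n+1))} ≤ (n+1) ∑_{k=0}^∞ e^{-I(k)}`. -/
theorem stmt_11 :
    (∀ u : ℝ, 0 ≤ u → 0 ≤ rateI u) ∧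
    ConvexOn ℝ (Set.Ici (0 : ℝ)) rateI ∧
    rateI 0 = 0 ∧
    (∀ n : ℕ,
      ∑' k : ℕ, Real.exp (-rateI (((k : ℝ) + 1) / ((n : ℝ) + 1))) ≤
        ((n : ℝ) + 1) * ∑' k : ℕ, Real.exp (-rateI (k : ℝ))) := by
  have hdiff : Differentiable ℝ rateI := fun u => (rateI_hasDerivAt u).differentiableAt
  refine ⟨rateI_nonneg, ?_, rateI_zero, ?_⟩
  · apply MonotoneOn.convexOn_of_deriv (convex_Ici 0) hdiff.continuous.continuousOn
      hdiff.differentiableOn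
    intro x hx y hy hxy
    rw [interior_Ici] at hx hy
    rw [(rateI_hasDerivAt x).deriv, (rateI_hasDerivAt y).deriv]
    exact Real.arsinh_le_arsinh.mpr (by linarith)
  · intro n
    set m : ℕ := n + 1 with hm
    haveI : NeZero m := ⟨Nat.succ_ne_zero n⟩
    set g : ℕ → ℝ := fun k => Real.exp (-rateI k) with hgdef
    have hg : Summable g := summable_g
    -- summability of the product function
    have hgprod : Summable (fun p : ℕ × Fin m => g p.1) := by
      rw [summable_prod_of_nonneg (fun p => (Real.exp_pos _).le)]
      constructor
      · intro x; exact summable_of_finite_support (Set.toFinite _)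
      · simp only [tsum_fintype, Finset.sum_const, Finset.card_univ, Fintype.card_fin,
          nsmul_eq_mul]
        exact hg.mul_left _
    have hgdiv : Summable (fun k : ℕ => g (k / m)) := by
      have := hgprod.comp_injective (Nat.divModEquiv m).injective
      simpa [Nat.divModEquiv, Function.comp_def] using this
    -- pointwise bound
    have hpt : ∀ k : ℕ, Real.exp (-rateI (((k : ℝ) + 1) / ((n : ℝ) + 1))) ≤ g (k / m) := by
      intro k
      apply Real.exp_le_exp.mpr
      simp only [neg_le_neg_iff]
      have h1 : ((k / m : ℕ) : ℝ) ≤ ((k : ℝ) + 1) / ((n : ℝ) + 1) := by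
        have h2 : (k / m : ℕ) * m ≤ k := Nat.div_mul_le_self k m
        have h3 : ((k / m : ℕ) : ℝ) * m ≤ (k : ℝ) := by exact_mod_cast h2
        rw [le_div_iff₀ (by positivity)]
        push_cast [hm] at h3 ⊢
        linarith
      exact rateI_monotoneOn (Set.mem_Ici.mpr (Nat.cast_nonneg _))
        (Set.mem_Ici.mpr (by positivity)) h1
    have hf : Summable (fun k : ℕ => Real.exp (-rateI (((k : ℝ) + 1) / ((n : ℝ) + 1)))) :=
      Summable.of_nonneg_of_le (fun k => (Real.exp_pos _).le) hpt hgdiv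
    calc ∑' k : ℕ, Real.exp (-rateI (((k : ℝ) + 1) / ((n : ℝ) + 1)))
        ≤ ∑' k : ℕ, g (k / m) := Summable.tsum_le_tsum hpt hf hgdiv
      _ = ∑' p : ℕ × Fin m, g p.1 := by
          rw [← (Nat.divModEquiv m).tsum_eq (fun p : ℕ × Fin m => g p.1)]
          simp [Nat.divModEquiv]
      _ = ∑' j : ℕ, ∑' r : Fin m, g j := Summable.tsum_prod hgprod
      _ = ((n : ℝ) + 1) * ∑' k : ℕ, Real.exp (-rateI (k : ℝ)) := by
          simp only [tsum_fintype, Finset.sum_const, Finset.card_univ, Fintype.card_fin,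
            nsmul_eq_mul]
          rw [tsum_mul_left]
          push_cast [hm]
          ring
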